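/- Fix a real number α, a real number α₀ > 0, a point x₀ ∈ ℝⁿ and s > 0. Then there exists a constant c > 0 such that u(x) = c·(s² − |x−x₀|²)^{1−n/2} is a positive k-admissible solution on B_s(x₀) of the equation σ_k((2/(n−2))u^{−(n+2)/(n−2)}W[u]) + α·σ_{k−1}((2/(n−2))u^{−(n+2)/(n−2)}W[u]) = α₀, with u(x) → ∞ as x → ∂B_s(x₀); and there exists c > 0 such that v(x) = c·(|x−x₀|² − s²)^{1−n/2} is a positive k-admissible solution of the same equation on ℝⁿ ∖ B̄_s(x₀) with v(x) → ∞ as x → ∂B_s(x₀). -/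

import Mathlib

open scoped BigOperators
open Metric Filter

noncomputable section

/-- Euclidean space ℝⁿ. -/
abbrev Eucl (n : ℕ) : Type := EuclideanSpace ℝ (Fin n)

/-- First partial derivative `∂ᵢ u (x)`. -/
def pd (n : ℕ) (u : Eucl n → ℝ) (x : Eucl n) (i : Fin n) : ℝ :=
  fderiv ℝ u x (EuclideanSpace.single i (1 : ℝ))

/-- Second partial derivative `∂ᵢ∂ⱼ u (x)`. -/
def pd2 (n : ℕ) (u : Eucl n → ℝ) (x : Eucl n) (i j : Fin n) : ℝ :=
  fderiv ℝ (fun y => pd n u y j) x (EuclideanSpace.single i (1 : ℝ))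

/-- The matrix `W[u]` with entries
`W_ij[u] = (n−2)∂ᵢ∂ⱼu − (n/u)∂ᵢu ∂ⱼu + (Δu + |∇u|²/u) δᵢⱼ`. -/
def Wmat (n : ℕ) (u : Eucl n → ℝ) (x : Eucl n) : Matrix (Fin n) (Fin n) ℝ :=
  fun i j =>
    ((n : ℝ) - 2) * pd2 n u x i j
      - ((n : ℝ) / u x) * pd n u x i * pd n u x j
      + ((∑ l, pd2 n u x l l) + (∑ l, (pd n u x l) ^ 2) / u x) *
          (if i = j then (1 : ℝ) else 0)

/-- kth elementary symmetric polynomial of a vector in ℝⁿ. -/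
def esymm (n : ℕ) (k : ℕ) (v : Fin n → ℝ) : ℝ :=
  ∑ s ∈ Finset.powersetCard k (Finset.univ : Finset (Fin n)), ∏ i ∈ s, v i

/-- `σ_k(A) := σ_k(λ(A))`, the kth elementary symmetric function of the eigenvalues
of a symmetric matrix (junk value `0` for non-symmetric matrices). -/
def sigmaM (n : ℕ) (k : ℕ) (A : Matrix (Fin n) (Fin n) ℝ) : ℝ :=
  letI := Classical.propDecidable A.IsHermitian
  if h : A.IsHermitian then esymm n k h.eigenvalues else 0

/-- `λ(A) ∈ Γ_k`, i.e. `σ_j(λ(A)) > 0` for `j = 1, …, k`. -/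
def inGammaM (n k : ℕ) (A : Matrix (Fin n) (Fin n) ℝ) : Prop :=
  ∀ j : ℕ, 1 ≤ j → j ≤ k → 0 < sigmaM n j A

/-- `v ∈ Γ_k` for vectors. -/
def inGammaV (n k : ℕ) (v : Fin n → ℝ) : Prop :=
  ∀ j : ℕ, 1 ≤ j → j ≤ k → 0 < esymm n j v

/-- The Garding cone `Γ_k` as a subset of ℝⁿ. -/
def GammaSet (n k : ℕ) : Set (Fin n → ℝ) := {v | inGammaV n k v}

/-- k-admissibility of a function on a set. -/
def Admissible (n k : ℕ) (s : Set (Eucl n)) (u : Eucl n → ℝ) : Prop :=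
  ∀ x ∈ s, inGammaM n k (Wmat n u x)

/-- Equation (*): `σ_k^{1/k}(W[u]) = ((n−2)/2) u^{(n+2)/(n−2)}` at a point. -/
def EqStar (n k : ℕ) (u : Eucl n → ℝ) (x : Eucl n) : Prop :=
  (sigmaM n k (Wmat n u x)) ^ ((1 : ℝ) / k)
    = (((n : ℝ) - 2) / 2) * (u x) ^ (((n : ℝ) + 2) / ((n : ℝ) - 2))

/-- `S` is a (nonempty) compact smooth embedded submanifold of ℝⁿ of codimension `m`:
locally a regular level set of a smooth submersion. -/
def IsSmoothCompactSubmanifold (n m : ℕ) (S : Set (Eucl n)) : Prop :=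
  IsCompact S ∧ S.Nonempty ∧
    ∀ x ∈ S, ∃ U : Set (Eucl n), IsOpen U ∧ x ∈ U ∧
      ∃ φ : Eucl n → EuclideanSpace ℝ (Fin m),
        ContDiffOn ℝ (⊤ : ℕ∞) φ U ∧
        (∀ y ∈ U, Function.Surjective (fderiv ℝ φ y)) ∧
        S ∩ U = {y ∈ U | φ y = 0}

/-- `u(x) → ∞` as `x → ∂Ω`. -/
def BlowsUpAtBoundary (n : ℕ) (Ω : Set (Eucl n)) (u : Eucl n → ℝ) : Prop :=
  ∀ C : ℝ, ∃ δ > (0 : ℝ), ∀ x ∈ Ω, Metric.infDist x (frontier Ω) < δ → C < u x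

/-- `ρ(x)^{n/2−1} u(x) → L` as `x → ∂Ω`, where `ρ(x) = dist(x, ∂Ω)`. -/
def BoundaryRate (n : ℕ) (Ω : Set (Eucl n)) (u : Eucl n → ℝ) (L : ℝ) : Prop :=
  ∀ ε > (0 : ℝ), ∃ δ > (0 : ℝ), ∀ x ∈ Ω, Metric.infDist x (frontier Ω) < δ →
    |(Metric.infDist x (frontier Ω)) ^ ((n : ℝ) / 2 - 1) * u x - L| < ε

/-- `((n−1)·binom(n,k)^{1/k})^{(n−2)/4}`. -/
def growthConst (n k : ℕ) : ℝ :=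
  (((n : ℝ) - 1) * ((n.choose k : ℝ) ^ ((1 : ℝ) / k))) ^ (((n : ℝ) - 2) / 4)

/-- `(4(n−1)·binom(n,k)^{1/k}·s²)^{(n−2)/4}`. -/
def ballConst (n k : ℕ) (s : ℝ) : ℝ :=
  (4 * ((n : ℝ) - 1) * ((n.choose k : ℝ) ^ ((1 : ℝ) / k)) * s ^ 2) ^ (((n : ℝ) - 2) / 4)

/-- The vector `v_m` whose first `n−m+1` coordinates equal `n−m` and whose
last `m−1` coordinates equal `2−m`. -/
def vvec (n m : ℕ) : Fin n → ℝ :=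
  fun i => if (i : ℕ) < n - m + 1 then (n : ℝ) - (m : ℝ) else 2 - (m : ℝ)

/-- `(2/(n−2)) u^{−(n+2)/(n−2)} W[u]`. -/
def Wscaled (n : ℕ) (u : Eucl n → ℝ) (x : Eucl n) : Matrix (Fin n) (Fin n) ℝ :=
  ((2 / ((n : ℝ) - 2)) * (u x) ^ (-(((n : ℝ) + 2) / ((n : ℝ) - 2)))) • Wmat n u x

/-- Equation (**): `σ_k((2/(n−2))u^{−(n+2)/(n−2)}W[u]) + α σ_{k−1}(…) = α₀` at a point. -/
def EqGen (n k : ℕ) (α α₀ : Eucl n → ℝ) (u : Eucl n → ℝ) (x : Eucl n) : Prop :=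
  sigmaM n k (Wscaled n u x) + α x * sigmaM n (k - 1) (Wscaled n u x) = α₀ x

/-- Subsolution of (*) on a set. -/
def IsSubsolutionStar (n k : ℕ) (s : Set (Eucl n)) (u : Eucl n → ℝ) : Prop :=
  ∀ x ∈ s, inGammaM n k (Wmat n u x) ∧
    (((n : ℝ) - 2) / 2) * (u x) ^ (((n : ℝ) + 2) / ((n : ℝ) - 2))
      ≤ (sigmaM n k (Wmat n u x)) ^ ((1 : ℝ) / k)

/-- Supersolution of (*) on a set. -/
def IsSupersolutionStar (n k : ℕ) (s : Set (Eucl n)) (u : Eucl n → ℝ) : Prop :=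
  ∀ x ∈ s, ¬ inGammaM n k (Wmat n u x) ∨
    (sigmaM n k (Wmat n u x)) ^ ((1 : ℝ) / k)
      ≤ (((n : ℝ) - 2) / 2) * (u x) ^ (((n : ℝ) + 2) / ((n : ℝ) - 2))

/-- The matrix `𝒲[v] = ∇²v − ∇v⊗∇v + (Δv/(n−2) + |∇v|²)·I`. -/
def calW (n : ℕ) (v : Eucl n → ℝ) (x : Eucl n) : Matrix (Fin n) (Fin n) ℝ :=
  fun i j =>
    pd2 n v x i j - pd n v x i * pd n v x j
      + ((∑ l, pd2 n v x l l) / ((n : ℝ) - 2) + ∑ l, (pd n v x l) ^ 2) *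
          (if i = j then (1 : ℝ) else 0)

/-- Equation (***): `σ_k((n−2)e^{−2v}𝒲[v]) + α σ_{k−1}((n−2)e^{−2v}𝒲[v]) = α₀` at a point. -/
def EqTriple (n k : ℕ) (α α₀ v : Eucl n → ℝ) (x : Eucl n) : Prop :=
  sigmaM n k ((((n : ℝ) - 2) * Real.exp (-2 * v x)) • calW n v x)
    + α x * sigmaM n (k - 1) ((((n : ℝ) - 2) * Real.exp (-2 * v x)) • calW n v x)
    = α₀ x

/-- The operator `G[v] = σ_k(𝒲[v])/σ_{k−1}(𝒲[v]) − (α₀ e^{2kv}/(n−2)^k)·(1/σ_{k−1}(𝒲[v]))`. -/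
def Gop (n k : ℕ) (α₀ : Eucl n → ℝ) (v : Eucl n → ℝ) (x : Eucl n) : ℝ :=
  sigmaM n k (calW n v x) / sigmaM n (k - 1) (calW n v x)
    - (α₀ x * Real.exp (2 * (k : ℝ) * v x) / ((n : ℝ) - 2) ^ k)
        * (1 / sigmaM n (k - 1) (calW n v x))

section Aux
variable {n : ℕ}

lemma hasFDerivAt_q (x₀ x : Eucl n) :
    HasFDerivAt (fun y : Eucl n => ‖y - x₀‖ ^ 2)
      ((fderivInnerCLM ℝ (x - x₀, x - x₀)).comp
        ((ContinuousLinearMap.id ℝ (Eucl n)).prod (ContinuousLinearMap.id ℝ (Eucl n)))) x := by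
  have h1 : HasFDerivAt (fun y : Eucl n => y - x₀) (ContinuousLinearMap.id ℝ (Eucl n)) x :=
    (hasFDerivAt_id x).sub_const x₀
  have h2 := h1.inner ℝ h1
  have : (fun y : Eucl n => ‖y - x₀‖ ^ 2) = fun y : Eucl n => (inner ℝ (y - x₀) (y - x₀) : ℝ) := by
    funext y; rw [real_inner_self_eq_norm_sq]
  rw [this]
  exact h2

lemma q_deriv_apply (x₀ x : Eucl n) (i : Fin n) :
    ((fderivInnerCLM ℝ (x - x₀, x - x₀)).comp
        ((ContinuousLinearMap.id ℝ (Eucl n)).prod (ContinuousLinearMap.id ℝ (Eucl n))))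
      (EuclideanSpace.single i (1:ℝ)) = 2 * (x i - x₀ i) := by
  simp [fderivInnerCLM_apply, EuclideanSpace.inner_single_left, EuclideanSpace.inner_single_right,
    PiLp.sub_apply]
  ring

lemma hasFDerivAt_w (x₀ x : Eucl n) (ε t : ℝ) :
    HasFDerivAt (fun y : Eucl n => ε * ‖y - x₀‖ ^ 2 + t)
      (ε • ((fderivInnerCLM ℝ (x - x₀, x - x₀)).comp
        ((ContinuousLinearMap.id ℝ (Eucl n)).prod (ContinuousLinearMap.id ℝ (Eucl n))))) x :=
  ((hasFDerivAt_q x₀ x).const_mul ε).add_const t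

lemma hasFDerivAt_u (x₀ x : Eucl n) (ε t c p : ℝ)
    (hw : ε * ‖x - x₀‖ ^ 2 + t ≠ 0) :
    HasFDerivAt (fun y : Eucl n => c * (ε * ‖y - x₀‖ ^ 2 + t) ^ p)
      (c • (p * (ε * ‖x - x₀‖ ^ 2 + t) ^ (p - 1)) •
        (ε • ((fderivInnerCLM ℝ (x - x₀, x - x₀)).comp
        ((ContinuousLinearMap.id ℝ (Eucl n)).prod (ContinuousLinearMap.id ℝ (Eucl n)))))) x :=
  ((hasFDerivAt_w x₀ x ε t).rpow_const (Or.inl hw)).const_mul c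

lemma pd_u (x₀ x : Eucl n) (ε t c p : ℝ) (hw : ε * ‖x - x₀‖ ^ 2 + t ≠ 0) (j : Fin n) :
    pd n (fun y : Eucl n => c * (ε * ‖y - x₀‖ ^ 2 + t) ^ p) x j
      = 2 * c * ε * p * (ε * ‖x - x₀‖ ^ 2 + t) ^ (p - 1) * (x j - x₀ j) := by
  rw [pd, (hasFDerivAt_u x₀ x ε t c p hw).fderiv]
  simp only [ContinuousLinearMap.smul_apply, smul_eq_mul, q_deriv_apply]
  ring

lemma hasFDerivAt_coord (x₀ x : Eucl n) (j : Fin n) :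
    HasFDerivAt (fun y : Eucl n => y j - x₀ j)
      (innerSL ℝ (EuclideanSpace.single j (1:ℝ))) x := by
  have h := ((innerSL ℝ (EuclideanSpace.single j (1:ℝ))).hasFDerivAt (x := x)).sub_const (x₀ j)
  have he : (fun y : Eucl n => (innerSL ℝ (EuclideanSpace.single j (1:ℝ))) y - x₀ j)
      = fun y : Eucl n => y j - x₀ j := by
    funext y
    simp [EuclideanSpace.inner_single_left]
  rwa [he] at h

lemma pd2_u (x₀ x : Eucl n) (ε t c p : ℝ) (hw : ε * ‖x - x₀‖ ^ 2 + t ≠ 0) (i j : Fin n) :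
    pd2 n (fun y : Eucl n => c * (ε * ‖y - x₀‖ ^ 2 + t) ^ p) x i j
      = 4 * c * ε * ε * p * (p - 1) * (ε * ‖x - x₀‖ ^ 2 + t) ^ (p - 2)
          * (x i - x₀ i) * (x j - x₀ j)
        + 2 * c * ε * p * (ε * ‖x - x₀‖ ^ 2 + t) ^ (p - 1)
          * (if i = j then (1:ℝ) else 0) := by
  have hopen : IsOpen {y : Eucl n | ε * ‖y - x₀‖ ^ 2 + t ≠ 0} := by
    have hcont : Continuous (fun y : Eucl n => ε * ‖y - x₀‖ ^ 2 + t) := by fun_prop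
    exact isOpen_compl_singleton.preimage hcont
  have hev : (fun y : Eucl n => pd n (fun z : Eucl n => c * (ε * ‖z - x₀‖ ^ 2 + t) ^ p) y j)
      =ᶠ[nhds x] (fun y : Eucl n =>
        (2 * c * ε * p) * ((ε * ‖y - x₀‖ ^ 2 + t) ^ (p - 1) * (y j - x₀ j))) := by
    filter_upwards [hopen.mem_nhds hw] with y hy
    rw [pd_u x₀ y ε t c p hy j]; ring
  rw [pd2, hev.fderiv_eq]
  have h1 : HasFDerivAt (fun y : Eucl n => (ε * ‖y - x₀‖ ^ 2 + t) ^ (p - 1))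
      (((p - 1) * (ε * ‖x - x₀‖ ^ 2 + t) ^ (p - 1 - 1)) •
        (ε • ((fderivInnerCLM ℝ (x - x₀, x - x₀)).comp
        ((ContinuousLinearMap.id ℝ (Eucl n)).prod (ContinuousLinearMap.id ℝ (Eucl n)))))) x :=
    (hasFDerivAt_w x₀ x ε t).rpow_const (Or.inl hw)
  have h2 := hasFDerivAt_coord x₀ x j
  have h3 : HasFDerivAt (fun y : Eucl n =>
      (2 * c * ε * p) * ((ε * ‖y - x₀‖ ^ 2 + t) ^ (p - 1) * (y j - x₀ j))) _ x :=
    (h1.mul h2).const_mul (2 * c * ε * p)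
  rw [h3.fderiv]
  simp only [ContinuousLinearMap.smul_apply, ContinuousLinearMap.add_apply, smul_eq_mul,
    q_deriv_apply, innerSL_apply_apply, EuclideanSpace.inner_single_left, map_one,
    EuclideanSpace.single_apply, RCLike.inner_apply, starRingEnd_apply]
  have hpe : p - 1 - 1 = p - 2 := by ring
  rw [hpe]
  by_cases hij : i = j
  · subst hij; simp; ring
  · simp [hij, Ne.symm hij]; ring

lemma norm_sq_sum (x₀ x : Eucl n) : ∑ l, (x l - x₀ l) ^ 2 = ‖x - x₀‖ ^ 2 := by
  rw [EuclideanSpace.norm_eq]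
  rw [Real.sq_sqrt (by positivity)]
  refine Finset.sum_congr rfl fun l _ => ?_
  rw [PiLp.sub_apply, Real.norm_eq_abs, sq_abs]

lemma Wmat_u (hn : 3 ≤ n) (x₀ x : Eucl n) (ε t c : ℝ) (hε : ε = 1 ∨ ε = -1)
    (hw : 0 < ε * ‖x - x₀‖ ^ 2 + t) (hc : c ≠ 0) :
    Wmat n (fun y : Eucl n => c * (ε * ‖y - x₀‖ ^ 2 + t) ^ (1 - (n:ℝ)/2)) x
      = (4 * c * (1 - (n:ℝ)/2) * ((n:ℝ) - 1) * (ε * t)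
          * (ε * ‖x - x₀‖ ^ 2 + t) ^ ((1 - (n:ℝ)/2) - 2)) •
        (1 : Matrix (Fin n) (Fin n) ℝ) := by
  set p : ℝ := 1 - (n:ℝ)/2 with hp
  set W : ℝ := ε * ‖x - x₀‖ ^ 2 + t with hW
  have hWne : W ≠ 0 := ne_of_gt hw
  have hA1 : W ^ (p - 1) = W ^ (p - 2) * W := by
    rw [show p - 1 = (p - 2) + 1 by ring, Real.rpow_add_one hWne]
  have hA0 : W ^ p = W ^ (p - 2) * W ^ 2 := by
    rw [← Real.rpow_two, ← Real.rpow_add hw]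
    congr 1
    ring
  have hQ : ‖x - x₀‖ ^ 2 = ε * (W - t) := by
    rcases hε with h | h <;> rw [h] at hW ⊢ <;> simp [hW] <;> ring
  have hsum2 : (∑ l, pd2 n (fun y : Eucl n => c * (ε * ‖y - x₀‖ ^ 2 + t) ^ p) x l l)
      = 4 * c * ε * ε * p * (p - 1) * W ^ (p - 2) * (ε * (W - t))
        + 2 * c * ε * p * (W ^ (p - 2) * W) * n := by
    rw [Finset.sum_congr rfl (fun l _ => pd2_u x₀ x ε t c p hWne l l)]
    simp only [eq_self_iff_true, if_true, if_pos rfl, mul_one, ← hW, hA1]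
    generalize W ^ (p - 2) = A
    have e1 : ∀ l : Fin n, 4*c*ε*ε*p*(p-1)*A*(x l - x₀ l)*(x l - x₀ l) + 2*c*ε*p*(A*W)
        = (4*c*ε*ε*p*(p-1)*A)*(x l - x₀ l)^2 + 2*c*ε*p*(A*W) := fun l => by ring
    rw [Finset.sum_congr rfl (fun l _ => e1 l), Finset.sum_add_distrib, ← Finset.mul_sum,
      norm_sq_sum, hQ, Finset.sum_const, Finset.card_univ, Fintype.card_fin, nsmul_eq_mul]
    ring
  have hsum1 : (∑ l, (pd n (fun y : Eucl n => c * (ε * ‖y - x₀‖ ^ 2 + t) ^ p) x l) ^ 2)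
      = (2 * c * ε * p * (W ^ (p - 2) * W)) ^ 2 * (ε * (W - t)) := by
    rw [Finset.sum_congr rfl (fun l _ => by rw [pd_u x₀ x ε t c p hWne l])]
    simp only [← hW, hA1]
    generalize W ^ (p - 2) = A
    have e1 : ∀ l : Fin n, (2*c*ε*p*(A*W)*(x l - x₀ l))^2
        = ((2*c*ε*p*(A*W))^2)*(x l - x₀ l)^2 := fun l => by ring
    rw [Finset.sum_congr rfl (fun l _ => e1 l), ← Finset.mul_sum, norm_sq_sum, hQ]
  funext i j
  simp only [Wmat, Matrix.smul_apply, Matrix.one_apply, smul_eq_mul]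
  rw [pd2_u x₀ x ε t c p hWne i j, pd_u x₀ x ε t c p hWne i, pd_u x₀ x ε t c p hWne j,
    hsum1, hsum2]
  simp only [← hW, hA1, hA0]
  have hApos : 0 < W ^ (p - 2) := Real.rpow_pos_of_pos hw _
  generalize W ^ (p - 2) = A at hApos ⊢
  have hAne : A ≠ 0 := ne_of_gt hApos
  have hn2 : ((n:ℝ)) ≥ 3 := by exact_mod_cast hn
  rcases hε with h | h <;> subst h <;>
  · by_cases hij : i = j
    · subst hij
      simp only [if_pos rfl, mul_one]
      field_simp
      ring
    · simp only [if_neg hij, mul_zero, add_zero, mul_one]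
      field_simp
      ring

lemma isHermitian_smul_one (μ : ℝ) : (μ • (1 : Matrix (Fin n) (Fin n) ℝ)).IsHermitian := by
  ext i j
  simp only [Matrix.conjTranspose_apply, Matrix.smul_apply, Matrix.one_apply, star_trivial]
  by_cases h : i = j <;> simp [h, eq_comm]

lemma eigenvalues_smul_one (μ : ℝ) (h : (μ • (1 : Matrix (Fin n) (Fin n) ℝ)).IsHermitian)
    (i : Fin n) : h.eigenvalues i = μ := by
  have hmem := h.eigenvalues_mem_spectrum_real i
  by_contra hne
  rw [spectrum.mem_iff] at hmem
  apply hmem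
  have e : (algebraMap ℝ (Matrix (Fin n) (Fin n) ℝ)) (h.eigenvalues i) - μ • 1
      = (algebraMap ℝ (Matrix (Fin n) (Fin n) ℝ)) (h.eigenvalues i - μ) := by
    rw [map_sub, Algebra.algebraMap_eq_smul_one, Algebra.algebraMap_eq_smul_one]
  rw [e]
  exact (isUnit_iff_ne_zero.mpr (sub_ne_zero.mpr hne)).map (algebraMap ℝ _)

lemma esymm_const (μ : ℝ) (j : ℕ) : esymm n j (fun _ => μ) = (n.choose j : ℝ) * μ ^ j := by
  unfold esymm
  rw [Finset.sum_congr rfl (fun s hs => ?_), Finset.sum_const, Finset.card_powersetCard,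
    Finset.card_univ, Fintype.card_fin, nsmul_eq_mul]
  exact (Finset.prod_const μ).trans (by rw [(Finset.mem_powersetCard.mp hs).2])

lemma sigmaM_smul_one (μ : ℝ) (j : ℕ) :
    sigmaM n j (μ • (1 : Matrix (Fin n) (Fin n) ℝ)) = (n.choose j : ℝ) * μ ^ j := by
  unfold sigmaM
  rw [dif_pos (isHermitian_smul_one μ)]
  rw [show (isHermitian_smul_one (n := n) μ).eigenvalues = fun _ => μ from
    funext (eigenvalues_smul_one μ _), esymm_const]

lemma exists_mu (n k : ℕ) (hk : 2 ≤ k) (hkn : k ≤ n) (a a₀ : ℝ) (ha₀ : 0 < a₀) :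
    ∃ μ > (0:ℝ), (n.choose k : ℝ) * μ ^ k + a * ((n.choose (k-1) : ℝ) * μ ^ (k-1)) = a₀ := by
  set f : ℝ → ℝ := fun μ => (n.choose k : ℝ) * μ ^ k + a * ((n.choose (k-1) : ℝ) * μ ^ (k-1))
    with hf
  have hc : Continuous f := by fun_prop
  have hf0 : f 0 = 0 := by
    simp [hf, zero_pow (by omega : k ≠ 0), zero_pow (by omega : k - 1 ≠ 0)]
  have hCk : (0:ℝ) < (n.choose k : ℝ) := by
    exact_mod_cast Nat.choose_pos hkn
  set M : ℝ := max 1 ((a₀ + |a| * (n.choose (k-1) : ℝ)) / (n.choose k : ℝ)) with hM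
  have hM1 : (1:ℝ) ≤ M := le_max_left _ _
  have hM0 : (0:ℝ) ≤ M := by linarith
  have hfM : a₀ ≤ f M := by
    have h1 : a₀ + |a| * (n.choose (k-1) : ℝ) ≤ (n.choose k : ℝ) * M := by
      have h0 : a₀ + |a| * (n.choose (k-1) : ℝ)
          = (n.choose k : ℝ) * ((a₀ + |a| * (n.choose (k-1) : ℝ)) / (n.choose k : ℝ)) := by
        field_simp
      rw [h0, hM]
      exact mul_le_mul_of_nonneg_left (le_max_right _ _) hCk.le
    have hMk1 : (1:ℝ) ≤ M ^ (k-1) := one_le_pow₀ hM1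
    have hMk : M ^ k = M ^ (k-1) * M := by
      rw [← pow_succ]
      congr 1
      omega
    have habs : a * ((n.choose (k-1) : ℝ) * M ^ (k-1))
        ≥ -(|a| * (n.choose (k-1) : ℝ) * M ^ (k-1)) := by
      have := neg_abs_le a
      have h2 : (0:ℝ) ≤ (n.choose (k-1) : ℝ) * M ^ (k-1) := by positivity
      nlinarith [abs_nonneg a]
    have h6 : (1:ℝ) * ((n.choose k:ℝ) * M - |a| * (n.choose (k-1):ℝ))
        ≤ M^(k-1) * ((n.choose k:ℝ) * M - |a| * (n.choose (k-1):ℝ)) :=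
      mul_le_mul_of_nonneg_right hMk1 (by linarith)
    have h7 : f M = (n.choose k:ℝ) * (M^(k-1) * M) + a * ((n.choose (k-1):ℝ) * M^(k-1)) := by
      rw [hf]
      simp only
      rw [hMk]
    rw [h7]
    nlinarith [habs]
  have hIcc : a₀ ∈ Set.Icc (f 0) (f M) := ⟨by rw [hf0]; exact ha₀.le, hfM⟩
  obtain ⟨μ, hμmem, hμ⟩ := intermediate_value_Icc hM0 hc.continuousOn hIcc
  refine ⟨μ, ?_, hμ⟩
  rcases eq_or_lt_of_le hμmem.1 with h | h
  · exfalso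
    rw [← h] at hμ
    rw [hf0] at hμ
    linarith
  · exact h

lemma scalar_comp (hn : 3 ≤ n) (s μ c W : ℝ) (hs : 0 < s) (hμ : 0 < μ) (hW : 0 < W)
    (hc : c = (4 * ((n:ℝ)-1) * s^2 / μ) ^ (((n:ℝ)-2)/4)) :
    (2 / ((n:ℝ) - 2)) * (c * W ^ (1 - (n:ℝ)/2)) ^ (-(((n:ℝ) + 2) / ((n:ℝ) - 2)))
      * (4 * c * (1 - (n:ℝ)/2) * ((n:ℝ) - 1) * (-(s^2)) * W ^ ((1 - (n:ℝ)/2) - 2)) = μ := by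
  have hn3 : (3:ℝ) ≤ (n:ℝ) := by exact_mod_cast hn
  have hne : (n:ℝ) - 2 ≠ 0 := by linarith
  have hX : (0:ℝ) < 4 * ((n:ℝ)-1) * s^2 / μ := by
    apply div_pos (by nlinarith) hμ
  have hcpos : 0 < c := hc ▸ Real.rpow_pos_of_pos hX _
  set p : ℝ := 1 - (n:ℝ)/2 with hp
  set E : ℝ := -(((n:ℝ) + 2) / ((n:ℝ) - 2)) with hE
  have h1 : (c * W ^ p) ^ E = c ^ E * W ^ (p * E) := by
    rw [Real.mul_rpow hcpos.le (Real.rpow_pos_of_pos hW p).le, ← Real.rpow_mul hW.le]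
  have h2 : W ^ (p * E) * W ^ (p - 2) = 1 := by
    rw [← Real.rpow_add hW]
    rw [show p * E + (p - 2) = 0 by rw [hp, hE]; field_simp; ring]
    exact Real.rpow_zero W
  have h3 : c ^ E * c = μ / (4 * ((n:ℝ)-1) * s^2) := by
    rw [← Real.rpow_add_one (ne_of_gt hcpos) E, hc, ← Real.rpow_mul hX.le]
    rw [show (((n:ℝ)-2)/4) * (E + 1) = -1 by rw [hE]; field_simp; ring]
    rw [Real.rpow_neg_one, inv_div]
  calc (2 / ((n:ℝ) - 2)) * (c * W ^ p) ^ E * (4 * c * p * ((n:ℝ) - 1) * (-(s^2)) * W ^ (p - 2))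
      = ((2/((n:ℝ)-2)) * 4 * p * ((n:ℝ)-1) * (-(s^2)))
          * ((c ^ E * c) * (W ^ (p*E) * W ^ (p-2))) := by rw [h1]; ring
    _ = μ := by
        rw [h2, h3, hp]
        have hsne : (4 * ((n:ℝ)-1) * s^2) ≠ 0 := by nlinarith
        have hn1 : (n:ℝ) - 1 ≠ 0 := by linarith
        field_simp
        ring

lemma engine {k : ℕ} (hn : 3 ≤ n) (hk : 2 ≤ k) (hkn : k ≤ n) (a a₀ s : ℝ)
    (hs : 0 < s) (ha₀ : 0 < a₀) (ε t : ℝ) (hε : ε = 1 ∨ ε = -1) (hεt : ε * t = -(s^2)) :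
    ∃ c > (0:ℝ), ∀ (x₀ x : Eucl n), 0 < ε * ‖x - x₀‖ ^ 2 + t →
      inGammaM n k (Wmat n (fun y : Eucl n => c * (ε * ‖y - x₀‖ ^ 2 + t) ^ (1 - (n:ℝ)/2)) x) ∧
      EqGen n k (fun _ => a) (fun _ => a₀)
        (fun y : Eucl n => c * (ε * ‖y - x₀‖ ^ 2 + t) ^ (1 - (n:ℝ)/2)) x := by
  have hn3 : (3:ℝ) ≤ (n:ℝ) := by exact_mod_cast hn
  obtain ⟨μ, hμ, heq⟩ := exists_mu n k hk hkn a a₀ ha₀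
  have hX : (0:ℝ) < 4 * ((n:ℝ)-1) * s^2 / μ := div_pos (by nlinarith) hμ
  refine ⟨(4 * ((n:ℝ)-1) * s^2 / μ) ^ (((n:ℝ)-2)/4), Real.rpow_pos_of_pos hX _, ?_⟩
  set c : ℝ := (4 * ((n:ℝ)-1) * s^2 / μ) ^ (((n:ℝ)-2)/4) with hc
  have hcpos : 0 < c := Real.rpow_pos_of_pos hX _
  intro x₀ x hw
  have hWm := Wmat_u hn x₀ x ε t c hε hw (ne_of_gt hcpos)
  rw [hεt] at hWm
  set W : ℝ := ε * ‖x - x₀‖ ^ 2 + t with hWdef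
  have hWp : 0 < W ^ ((1 - (n:ℝ)/2) - 2) := Real.rpow_pos_of_pos hw _
  have hD : 0 < 4 * c * (1 - (n:ℝ)/2) * ((n:ℝ) - 1) * (-(s^2)) * W ^ ((1 - (n:ℝ)/2) - 2) := by
    have h1 : 0 < 4 * c * ((n:ℝ)/2 - 1) * ((n:ℝ) - 1) * s^2 :=
      mul_pos (mul_pos (mul_pos (by linarith) (by linarith)) (by linarith)) (by positivity)
    have h2 : 4 * c * (1 - (n:ℝ)/2) * ((n:ℝ) - 1) * (-(s^2))
        = 4 * c * ((n:ℝ)/2 - 1) * ((n:ℝ) - 1) * s^2 := by ring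
    rw [h2]
    exact mul_pos h1 hWp
  constructor
  · intro j hj1 hjk
    rw [hWm, sigmaM_smul_one]
    have : (0:ℝ) < (n.choose j : ℝ) := by exact_mod_cast Nat.choose_pos (le_trans hjk hkn)
    positivity
  · unfold EqGen Wscaled
    rw [hWm, smul_smul]
    have hsc : (2 / ((n:ℝ) - 2)) *
        ((fun y : Eucl n => c * (ε * ‖y - x₀‖ ^ 2 + t) ^ (1 - (n:ℝ)/2)) x)
          ^ (-(((n:ℝ) + 2) / ((n:ℝ) - 2)))
        * (4 * c * (1 - (n:ℝ)/2) * ((n:ℝ) - 1) * (-(s^2)) * W ^ ((1 - (n:ℝ)/2) - 2)) = μ := by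
      simp only [← hWdef]
      exact scalar_comp hn s μ c W hs hμ hw hc
    rw [hsc, sigmaM_smul_one, sigmaM_smul_one]
    exact heq

end Aux

/-- Explicit radial solutions of the general equation (**) with constant
coefficients on a ball and on the exterior of a ball, blowing up at the sphere. -/


theorem stmt19 (n k : ℕ) (hn : 3 ≤ n) (hk : 2 ≤ k) (hkn : k ≤ n)
    (a a₀ : ℝ) (ha₀ : 0 < a₀) (x₀ : Eucl n) (s : ℝ) (hs : 0 < s) :
    (∃ c > (0 : ℝ), ∀ u : Eucl n → ℝ,
      (∀ x, u x = c * (s ^ 2 - ‖x - x₀‖ ^ 2) ^ (1 - (n : ℝ) / 2)) →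
      (∀ x ∈ Metric.ball x₀ s, 0 < u x) ∧
      Admissible n k (Metric.ball x₀ s) u ∧
      (∀ x ∈ Metric.ball x₀ s, EqGen n k (fun _ => a) (fun _ => a₀) u x) ∧
      (∀ C : ℝ, ∃ δ > (0 : ℝ), ∀ x ∈ Metric.ball x₀ s, s - dist x x₀ < δ → C < u x)) ∧
    (∃ c > (0 : ℝ), ∀ v : Eucl n → ℝ,
      (∀ x, v x = c * (‖x - x₀‖ ^ 2 - s ^ 2) ^ (1 - (n : ℝ) / 2)) →
      (∀ x ∈ (Metric.closedBall x₀ s)ᶜ, 0 < v x) ∧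
      Admissible n k (Metric.closedBall x₀ s)ᶜ v ∧
      (∀ x ∈ (Metric.closedBall x₀ s)ᶜ, EqGen n k (fun _ => a) (fun _ => a₀) v x) ∧
      (∀ C : ℝ, ∃ δ > (0 : ℝ), ∀ x ∈ (Metric.closedBall x₀ s)ᶜ,
        dist x x₀ - s < δ → C < v x)) := by
  have hn3 : (3:ℝ) ≤ (n:ℝ) := by exact_mod_cast hn
  have hpneg : (1 - (n:ℝ)/2) < 0 := by linarith
  constructor
  · -- interior solution on the ball
    obtain ⟨c, hcpos, hprop⟩ :=
      engine (k := k) hn hk hkn a a₀ s hs ha₀ (-1) (s^2) (Or.inr rfl) (by ring)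
    refine ⟨c, hcpos, ?_⟩
    intro u hu
    have hu' : u = fun y : Eucl n => c * ((-1) * ‖y - x₀‖ ^ 2 + s^2) ^ (1 - (n:ℝ)/2) := by
      funext y
      rw [hu y]
      congr 2
      ring
    subst hu'
    have hdom : ∀ x ∈ Metric.ball x₀ s, 0 < (-1) * ‖x - x₀‖ ^ 2 + s ^ 2 := by
      intro x hx
      have hd : ‖x - x₀‖ < s := by rw [← dist_eq_norm]; exact Metric.mem_ball.mp hx
      have h0 := norm_nonneg (x - x₀)
      nlinarith
    refine ⟨?_, ?_, ?_, ?_⟩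
    · intro x hx
      exact mul_pos hcpos (Real.rpow_pos_of_pos (hdom x hx) _)
    · intro x hx
      exact (hprop x₀ x (hdom x hx)).1
    · intro x hx
      exact (hprop x₀ x (hdom x hx)).2
    · intro C
      set T : ℝ := max (C / c) 0 + 1 with hTdef
      have hT : 0 < T := by positivity
      have hTC : C / c < T := lt_of_le_of_lt (le_max_left _ _) (by rw [hTdef]; linarith)
      set δ' : ℝ := T ^ (1 / (1 - (n:ℝ)/2)) with hδ'def
      have hδ' : 0 < δ' := Real.rpow_pos_of_pos hT _
      have hδ'p : δ' ^ (1 - (n:ℝ)/2) = T := by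
        rw [hδ'def, ← Real.rpow_mul hT.le]
        rw [one_div_mul_cancel (ne_of_lt hpneg)]
        exact Real.rpow_one T
      refine ⟨δ' / (2 * s), by positivity, ?_⟩
      intro x hx hclose
      have hd : dist x x₀ < s := Metric.mem_ball.mp hx
      have hd0 : 0 ≤ dist x x₀ := dist_nonneg
      have hwpos := hdom x hx
      have h1 : (s - dist x x₀) * (2 * s) < δ' := by
        calc (s - dist x x₀) * (2 * s) < (δ' / (2 * s)) * (2 * s) :=
              mul_lt_mul_of_pos_right hclose (by linarith)
          _ = δ' := by field_simp
      have h2 : (-1) * ‖x - x₀‖ ^ 2 + s ^ 2 ≤ (s - dist x x₀) * (2 * s) := by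
        rw [← dist_eq_norm]
        nlinarith
      have hlt : (-1) * ‖x - x₀‖ ^ 2 + s ^ 2 < δ' := lt_of_le_of_lt h2 h1
      have hmono := Real.rpow_lt_rpow_of_neg hwpos hlt hpneg
      rw [hδ'p] at hmono
      have hCT : C < T * c := by
        rw [div_lt_iff₀ hcpos] at hTC
        linarith
      have := mul_lt_mul_of_pos_right hmono hcpos
      exact lt_of_lt_of_le (lt_trans hCT this) (le_of_eq (mul_comm _ _))
  · -- exterior solution
    obtain ⟨c, hcpos, hprop⟩ :=
      engine (k := k) hn hk hkn a a₀ s hs ha₀ 1 (-(s^2)) (Or.inl rfl) (by ring)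
    refine ⟨c, hcpos, ?_⟩
    intro v hv
    have hv' : v = fun y : Eucl n => c * (1 * ‖y - x₀‖ ^ 2 + -(s^2)) ^ (1 - (n:ℝ)/2) := by
      funext y
      rw [hv y]
      congr 2
      ring
    subst hv'
    have hdom : ∀ x ∈ (Metric.closedBall x₀ s)ᶜ, 0 < 1 * ‖x - x₀‖ ^ 2 + -(s ^ 2) := by
      intro x hx
      have hd : s < ‖x - x₀‖ := by
        rw [← dist_eq_norm]
        exact lt_of_not_ge (fun h => hx (Metric.mem_closedBall.mpr h))
      nlinarith
    refine ⟨?_, ?_, ?_, ?_⟩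
    · intro x hx
      exact mul_pos hcpos (Real.rpow_pos_of_pos (hdom x hx) _)
    · intro x hx
      exact (hprop x₀ x (hdom x hx)).1
    · intro x hx
      exact (hprop x₀ x (hdom x hx)).2
    · intro C
      set T : ℝ := max (C / c) 0 + 1 with hTdef
      have hT : 0 < T := by positivity
      have hTC : C / c < T := lt_of_le_of_lt (le_max_left _ _) (by rw [hTdef]; linarith)
      set δ' : ℝ := T ^ (1 / (1 - (n:ℝ)/2)) with hδ'def
      have hδ' : 0 < δ' := Real.rpow_pos_of_pos hT _
      have hδ'p : δ' ^ (1 - (n:ℝ)/2) = T := by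
        rw [hδ'def, ← Real.rpow_mul hT.le]
        rw [one_div_mul_cancel (ne_of_lt hpneg)]
        exact Real.rpow_one T
      refine ⟨min s (δ' / (3 * s)), by positivity, ?_⟩
      intro x hx hclose
      have hd : s < dist x x₀ := by
        exact lt_of_not_ge (fun h => hx (Metric.mem_closedBall.mpr h))
      have hwpos := hdom x hx
      have hdle : dist x x₀ - s < δ' / (3 * s) := lt_of_lt_of_le hclose (min_le_right _ _)
      have hdls : dist x x₀ - s < s := lt_of_lt_of_le hclose (min_le_left _ _)
      have h1 : (dist x x₀ - s) * (3 * s) < δ' := by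
        calc (dist x x₀ - s) * (3 * s) < (δ' / (3 * s)) * (3 * s) :=
              mul_lt_mul_of_pos_right hdle (by linarith)
          _ = δ' := by field_simp
      have h2 : 1 * ‖x - x₀‖ ^ 2 + -(s ^ 2) ≤ (dist x x₀ - s) * (3 * s) := by
        rw [← dist_eq_norm]
        nlinarith
      have hlt : 1 * ‖x - x₀‖ ^ 2 + -(s ^ 2) < δ' := lt_of_le_of_lt h2 h1
      have hmono := Real.rpow_lt_rpow_of_neg hwpos hlt hpneg
      rw [hδ'p] at hmono
      have hCT : C < T * c := by
        rw [div_lt_iff₀ hcpos] at hTC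
        linarith
      have := mul_lt_mul_of_pos_right hmono hcpos
      exact lt_of_lt_of_le (lt_trans hCT this) (le_of_eq (mul_comm _ _))
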